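/- Let a < b be real numbers, let 0 < α < 1, let f : ℝ → ℝ be continuously differentiable on an open set containing [a, b], and let x ∈ (a, b). Then the function y ↦ (1/Γ(1−α)) ∫_a^y (y − z)^{−α} (f(z) − f(a)) dz is differentiable at x with derivative (1/Γ(1−α)) ∫_a^x (x − z)^{−α} f′(z) dz. (That is, the Riemann–Liouville fractional derivative of order α of the reduced function f − f(a) — whose limit as x → a⁺ defines the local fractional derivative of f at a — equals the Caputo fractional derivative of f of order α.) -/

import Mathlib

open Real MeasureTheory intervalIntegral

lemma subst_aux (a y α : ℝ) (hy : a < y) (g : ℝ → ℝ) :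
    (∫ z in a..y, (y - z) ^ (-α) * g z)
      = (y - a) ^ (1 - α) * ∫ t in (0:ℝ)..1, (1 - t) ^ (-α) * g (a + (y - a) * t) := by
  have hya : (0:ℝ) < y - a := sub_pos.2 hy
  have hc : y - a ≠ 0 := ne_of_gt hya
  have h1 := intervalIntegral.integral_comp_mul_add
    (a := (0:ℝ)) (b := 1) (fun z => (y - z) ^ (-α) * g z) hc a
  have h2 : (y - a) * 0 + a = a := by ring
  have h3 : (y - a) * 1 + a = y := by ring
  rw [h2, h3, smul_eq_mul] at h1
  have h4 : (∫ t in (0:ℝ)..1, (y - ((y-a) * t + a)) ^ (-α) * g ((y-a) * t + a))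
      = ∫ t in (0:ℝ)..1, (y - a) ^ (-α) * ((1 - t) ^ (-α) * g (a + (y - a) * t)) := by
    apply intervalIntegral.integral_congr
    intro t ht
    rw [Set.uIcc_of_le (by norm_num : (0:ℝ) ≤ 1)] at ht
    simp only
    have h5 : y - ((y - a) * t + a) = (y - a) * (1 - t) := by ring
    have h6 : (y - a) * t + a = a + (y - a) * t := by ring
    rw [h5, h6, Real.mul_rpow (le_of_lt hya) (by linarith [ht.2]), mul_assoc]
  rw [h4, intervalIntegral.integral_const_mul] at h1
  have h7 : (y - a) ^ (1 - α) = (y - a) * (y - a) ^ (-α) := by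
    rw [show (1 - α) = 1 + (-α) by ring, Real.rpow_add hya, Real.rpow_one]
  rw [h7, mul_assoc, h1, ← mul_assoc, mul_inv_cancel₀ hc, one_mul]

theorem rl_of_reduced_eq_caputo (a b : ℝ) (hab : a < b) (α : ℝ)
    (hα1 : 0 < α) (hα2 : α < 1) (f : ℝ → ℝ) (s : Set ℝ)
    (hs : IsOpen s) (hsub : Set.Icc a b ⊆ s) (hf : ContDiffOn ℝ 1 f s)
    (x : ℝ) (hx : x ∈ Set.Ioo a b) :
    HasDerivAt
      (fun y : ℝ => (1 / Real.Gamma (1 - α)) * ∫ z in a..y, (y - z) ^ (-α) * (f z - f a))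
      ((1 / Real.Gamma (1 - α)) * ∫ z in a..x, (x - z) ^ (-α) * deriv f z) x := by
  obtain ⟨hax, hxb⟩ := hx
  have h1α : (0:ℝ) < 1 - α := by linarith
  have hxa : (0:ℝ) < x - a := sub_pos.2 hax
  -- continuity of f and deriv f on s
  have hfc : ContinuousOn f s := hf.continuousOn
  have hf' : ContinuousOn (deriv f) s := hf.continuousOn_deriv_of_isOpen hs le_rfl
  have hdiff : ∀ z ∈ s, HasDerivAt f (deriv f z) z := fun z hz =>
    ((hf.differentiableOn one_ne_zero).differentiableAt (hs.mem_nhds hz)).hasDerivAt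
  -- bound on deriv f over [a,b]
  obtain ⟨M, hM⟩ := isCompact_Icc.exists_bound_of_continuousOn (hf'.mono hsub)
  -- integrability of (1-t)^(-α) on [0,1]
  have I0 : IntervalIntegrable (fun t : ℝ => (1 - t) ^ (-α)) volume 0 1 := by
    have := (intervalIntegrable_rpow' (a := 0) (b := 1) (by linarith : (-1:ℝ) < -α)).comp_sub_left 1
    simpa using this.symm
  -- ball around x inside Ioo a b
  set ε : ℝ := min (x - a) (b - x) with hε
  have hε0 : 0 < ε := lt_min hxa (sub_pos.2 hxb)
  have hball : Metric.ball x ε ⊆ Set.Ioo a b := by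
    intro y hy
    rw [Metric.mem_ball, Real.dist_eq, abs_lt] at hy
    constructor
    · have := min_le_left (x - a) (b - x); simp only [← hε] at this; linarith [hy.1]
    · have := min_le_right (x - a) (b - x); simp only [← hε] at this; linarith [hy.2]
  -- affine map lands in Icc a b
  have hmem : ∀ y ∈ Metric.ball x ε, ∀ t ∈ Set.Icc (0:ℝ) 1, a + (y - a) * t ∈ Set.Icc a b := by
    intro y hy t ht
    obtain ⟨hay, hyb⟩ := hball hy
    constructor
    · nlinarith [ht.1, ht.2]
    · nlinarith [ht.1, ht.2]
  have hmemx : ∀ t ∈ Set.Icc (0:ℝ) 1, a + (x - a) * t ∈ Set.Icc a b :=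
    hmem x (Metric.mem_ball_self hε0)
  -- measurability piece
  have hmeasr : Measurable (fun u : ℝ => u ^ (-α)) :=
    measurable_of_continuousOn_compl_singleton 0 (fun u hu =>
      (Real.continuousAt_rpow_const u (-α)
        (Or.inl (Set.mem_compl_singleton_iff.1 hu))).continuousWithinAt)
  have hmeas1 : AEStronglyMeasurable (fun t : ℝ => (1 - t) ^ (-α))
      (volume.restrict (Set.uIoc (0:ℝ) 1)) :=
    (hmeasr.comp (measurable_const.sub measurable_id)).aestronglyMeasurable
  have hcontaff : ∀ y ∈ Metric.ball x ε, ContinuousOn (fun t : ℝ => f (a + (y - a) * t))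
      (Set.Icc 0 1) := by
    intro y hy
    exact (hfc.mono hsub).comp (by fun_prop) (fun t ht => hmem y hy t ht)
  have hcontaff' : ContinuousOn (fun t : ℝ => deriv f (a + (x - a) * t)) (Set.Icc 0 1) :=
    (hf'.mono hsub).comp (by fun_prop) (fun t ht => hmemx t ht)
  -- Step 2 : differentiate under the integral sign
  have step2 := intervalIntegral.hasDerivAt_integral_of_dominated_loc_of_deriv_le
    (F := fun y t => (1 - t) ^ (-α) * (f (a + (y - a) * t) - f a))
    (F' := fun y t => (1 - t) ^ (-α) * (deriv f (a + (y - a) * t) * t))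
    (x₀ := x) (a := 0) (b := 1) (μ := volume)
    (bound := fun t => (1 - t) ^ (-α) * M)
    (Metric.ball_mem_nhds x hε0)
    (by -- hF_meas
      filter_upwards [Metric.ball_mem_nhds x hε0] with y hy
      exact hmeas1.mul ((((hcontaff y hy).mono
        (by rw [Set.uIoc_of_le (by norm_num : (0:ℝ) ≤ 1)]; exact Set.Ioc_subset_Icc_self)
        ).aestronglyMeasurable measurableSet_uIoc).sub aestronglyMeasurable_const))
    (by -- hF_int
      apply I0.mul_continuousOn
      rw [Set.uIcc_of_le (by norm_num : (0:ℝ) ≤ 1)]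
      exact (hcontaff x (Metric.mem_ball_self hε0)).sub continuousOn_const)
    (by -- hF'_meas
      exact hmeas1.mul (((hcontaff'.mono
        (by rw [Set.uIoc_of_le (by norm_num : (0:ℝ) ≤ 1)]; exact Set.Ioc_subset_Icc_self)
        ).aestronglyMeasurable measurableSet_uIoc).mul
        measurable_id.aestronglyMeasurable.restrict))
    (by -- h_bound
      filter_upwards with t
      intro ht y hy
      rw [Set.uIoc_of_le (by norm_num : (0:ℝ) ≤ 1)] at ht
      have ht01 : t ∈ Set.Icc (0:ℝ) 1 := ⟨le_of_lt ht.1, ht.2⟩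
      have h1t : (0:ℝ) ≤ (1 - t) ^ (-α) := Real.rpow_nonneg (by linarith [ht.2]) _
      have hMd : |deriv f (a + (y - a) * t)| ≤ M := hM _ (hmem y hy t ht01)
      have habs : |deriv f (a + (y - a) * t)| * |t| ≤ M * 1 := by
        apply mul_le_mul hMd _ (abs_nonneg t) ((abs_nonneg _).trans hMd)
        rw [abs_of_nonneg ht01.1]; exact ht01.2
      calc ‖(1 - t) ^ (-α) * (deriv f (a + (y - a) * t) * t)‖
          = (1 - t) ^ (-α) * (|deriv f (a + (y - a) * t)| * |t|) := by
            rw [Real.norm_eq_abs, abs_mul, abs_mul, abs_of_nonneg h1t]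
        _ ≤ (1 - t) ^ (-α) * (M * 1) := by
            exact mul_le_mul_of_nonneg_left habs h1t
        _ = (1 - t) ^ (-α) * M := by ring)
    (I0.mul_const M)
    (by -- h_diff
      filter_upwards with t
      intro ht y hy
      rw [Set.uIoc_of_le (by norm_num : (0:ℝ) ≤ 1)] at ht
      have ht01 : t ∈ Set.Icc (0:ℝ) 1 := ⟨le_of_lt ht.1, ht.2⟩
      have haff : HasDerivAt (fun y : ℝ => a + (y - a) * t) t y := by
        simpa using (((hasDerivAt_id y).sub_const a).mul_const t).const_add a
      have hz : a + (y - a) * t ∈ s := hsub (hmem y hy t ht01)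
      have hcomp : HasDerivAt (fun y : ℝ => f (a + (y - a) * t))
          (deriv f (a + (y - a) * t) * t) y :=
        (hdiff _ hz).comp y haff
      exact ((hcomp.sub_const (f a)).const_mul _))
  obtain ⟨Iψ, hφ⟩ := step2
  set φ : ℝ → ℝ := fun y => ∫ t in (0:ℝ)..1, (1 - t) ^ (-α) * (f (a + (y - a) * t) - f a)
    with hφdef
  set ψ : ℝ := ∫ t in (0:ℝ)..1, (1 - t) ^ (-α) * (deriv f (a + (x - a) * t) * t) with hψdef
  -- Step 3 : product rule
  have hpow : HasDerivAt (fun y : ℝ => (y - a) ^ (1 - α)) ((1 - α) * (x - a) ^ (-α)) x := by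
    have h := (Real.hasDerivAt_rpow_const (x := x - a) (p := 1 - α)
      (Or.inl (ne_of_gt hxa))).comp x ((hasDerivAt_id x).sub_const a)
    simpa [Function.comp_def, show (1 - α - 1 : ℝ) = -α by ring] using h
  have hprod : HasDerivAt (fun y : ℝ => (y - a) ^ (1 - α) * φ y)
      ((1 - α) * (x - a) ^ (-α) * φ x + (x - a) ^ (1 - α) * ψ) x := hpow.mul hφ
  -- Step 4 : transfer along eventual equality
  have heq : (fun y : ℝ => ∫ z in a..y, (y - z) ^ (-α) * (f z - f a))
      =ᶠ[nhds x] (fun y : ℝ => (y - a) ^ (1 - α) * φ y) := by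
    filter_upwards [Metric.ball_mem_nhds x hε0] with y hy
    exact subst_aux a y α (hball hy).1 (fun z => f z - f a)
  have hg : HasDerivAt (fun y : ℝ => ∫ z in a..y, (y - z) ^ (-α) * (f z - f a))
      ((1 - α) * (x - a) ^ (-α) * φ x + (x - a) ^ (1 - α) * ψ) x :=
    hprod.congr_of_eventuallyEq heq
  -- Step 5 : identify the derivative value
  have hval : (1 - α) * (x - a) ^ (-α) * φ x + (x - a) ^ (1 - α) * ψ
      = ∫ z in a..x, (x - z) ^ (-α) * deriv f z := by
    -- substitution on the RHS
    rw [subst_aux a x α hax (deriv f)]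
    set κ : ℝ := ∫ t in (0:ℝ)..1, (1 - t) ^ (-α) * deriv f (a + (x - a) * t) with hκdef
    set J : ℝ := ∫ t in (0:ℝ)..1, (1 - t) ^ (1 - α) * deriv f (a + (x - a) * t) with hJdef
    -- continuity facts on [0,1]
    have hIcc : Set.uIcc (0:ℝ) 1 = Set.Icc 0 1 := Set.uIcc_of_le (by norm_num)
    have hvc : Continuous (fun t : ℝ => (1 - t) ^ (1 - α)) :=
      continuous_iff_continuousAt.2 fun t => ContinuousAt.comp
        (Real.continuousAt_rpow_const _ _ (Or.inr (le_of_lt h1α))) (by fun_prop)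
    have hucont : ContinuousOn (fun t : ℝ => f (a + (x - a) * t) - f a) (Set.Icc 0 1) :=
      (hcontaff x (Metric.mem_ball_self hε0)).sub continuousOn_const
    have hu'int : IntervalIntegrable
        (fun t : ℝ => deriv f (a + (x - a) * t) * (x - a)) volume 0 1 := by
      apply ContinuousOn.intervalIntegrable
      rw [hIcc]; exact hcontaff'.mul continuousOn_const
    have hJint : IntervalIntegrable
        (fun t : ℝ => (1 - t) ^ (1 - α) * deriv f (a + (x - a) * t)) volume 0 1 := by
      apply ContinuousOn.intervalIntegrable
      rw [hIcc]; exact hvc.continuousOn.mul hcontaff'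
    -- integration by parts on [0,1]
    have hIBP := intervalIntegral.integral_mul_deriv_eq_deriv_mul_of_hasDerivAt
      (a := (0:ℝ)) (b := 1)
      (u := fun t : ℝ => f (a + (x - a) * t) - f a)
      (v := fun t : ℝ => -(1 - α)⁻¹ * (1 - t) ^ (1 - α))
      (u' := fun t : ℝ => deriv f (a + (x - a) * t) * (x - a))
      (v' := fun t : ℝ => (1 - t) ^ (-α))
      (by rw [hIcc]; exact hucont)
      (by rw [hIcc]; exact (continuous_const.mul hvc).continuousOn)
      (by
        intro t ht
        rw [show min (0:ℝ) 1 = 0 by norm_num, show max (0:ℝ) 1 = 1 by norm_num] at ht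
        have ht01 : t ∈ Set.Icc (0:ℝ) 1 := ⟨le_of_lt ht.1, le_of_lt ht.2⟩
        have haff : HasDerivAt (fun t : ℝ => a + (x - a) * t) (x - a) t := by
          simpa using ((hasDerivAt_id t).const_mul (x - a)).const_add a
        exact ((hdiff _ (hsub (hmemx t ht01))).comp t haff).sub_const (f a))
      (by
        intro t ht
        rw [show min (0:ℝ) 1 = 0 by norm_num, show max (0:ℝ) 1 = 1 by norm_num] at ht
        have h1t : (0:ℝ) < 1 - t := by linarith [ht.2]
        have hrp := (Real.hasDerivAt_rpow_const (x := 1 - t) (p := 1 - α)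
          (Or.inl (ne_of_gt h1t))).comp t ((hasDerivAt_id t).const_sub 1)
        have := hrp.const_mul (-(1 - α)⁻¹)
        simp only [Function.comp_def] at this
        convert this using 1
        rw [show (1 - α - 1 : ℝ) = -α by ring]
        field_simp)
      hu'int I0
    -- simplify the boundary terms
    have hb1 : f (a + (x - a) * 1) - f a = f x - f a := by norm_num
    have hb0 : f (a + (x - a) * 0) - f a = 0 := by norm_num
    have hb2 : -(1 - α)⁻¹ * ((1:ℝ) - 1) ^ (1 - α) = 0 := by
      rw [sub_self, Real.zero_rpow (ne_of_gt h1α)]; ring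
    rw [hb0, hb2, mul_zero, zero_mul, sub_zero, zero_sub] at hIBP
    -- rewrite the remaining integral in hIBP
    have hIBP2 : (∫ t in (0:ℝ)..1,
        (deriv f (a + (x - a) * t) * (x - a)) * (-(1 - α)⁻¹ * (1 - t) ^ (1 - α)))
        = -((1 - α)⁻¹ * ((x - a) * J)) := by
      rw [hJdef, ← intervalIntegral.integral_const_mul, ← intervalIntegral.integral_const_mul,
        ← intervalIntegral.integral_neg]
      apply intervalIntegral.integral_congr
      intro t _
      simp only
      ring
    rw [hIBP2, neg_neg] at hIBP
    -- φ x in terms of J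
    have hφx : φ x = (1 - α)⁻¹ * ((x - a) * J) := by
      rw [hφdef, ← hIBP]
      apply intervalIntegral.integral_congr
      intro t _
      simp only
      ring
    -- J + ψ = κ
    have hJψ : J + ψ = κ := by
      rw [hJdef, hψdef, hκdef, ← intervalIntegral.integral_add hJint Iψ]
      apply intervalIntegral.integral_congr
      intro t ht
      rw [hIcc] at ht
      simp only
      rcases eq_or_lt_of_le ht.2 with h | h
      · subst h
        norm_num [Real.zero_rpow (ne_of_gt h1α),
          Real.zero_rpow (show (-α:ℝ) ≠ 0 by intro hc; simp at hc; linarith)]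
      · have h1t : (0:ℝ) < 1 - t := by linarith
        rw [show (1 - α : ℝ) = -α + 1 by ring, Real.rpow_add h1t, Real.rpow_one]
        ring
    -- final algebra
    have h8 : (x - a) ^ (-α) * (x - a) = (x - a) ^ (1 - α) := by
      rw [show (1 - α : ℝ) = -α + 1 by ring, Real.rpow_add hxa, Real.rpow_one]
    rw [hφx, ← hJψ]
    have h9 : (1 - α) * (1 - α)⁻¹ = 1 := mul_inv_cancel₀ (ne_of_gt h1α)
    calc (1 - α) * (x - a) ^ (-α) * ((1 - α)⁻¹ * ((x - a) * J)) + (x - a) ^ (1 - α) * ψ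
        = ((1 - α) * (1 - α)⁻¹) * (((x - a) ^ (-α) * (x - a)) * J) + (x - a) ^ (1 - α) * ψ := by
          ring
      _ = (x - a) ^ (1 - α) * (J + ψ) := by rw [h9, h8]; ring
  rw [← hval]
  exact hg.const_mul (1 / Real.Gamma (1 - α))
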